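/- Let ℓ_r : ℝ^n → ℝ be differentiable and G-smooth. Let t ≥ 1, let α_0, …, α_{t−1} > 0, ε_0, …, ε_{t−1} ≥ 0, and let θ_0, …, θ_t ∈ ℝ^n and d_0, …, d_{t−1} ∈ ℝ^n satisfy θ_{i+1} = θ_i − α_i d_i and ⟨∇ℓ_r(θ_i), d_i⟩ ≥ −ε_i for all i = 0, …, t−1. Then ℓ_r(θ_t) − ℓ_r(θ_0) ≤ Σ_{i=0}^{t−1} ( α_i ε_i + (G α_i²/2) ‖d_i‖² ). -/

import Mathlib

open scoped RealInnerProductSpace BigOperators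
open InnerProductSpace intervalIntegral

lemma descent {n : ℕ} (f : EuclideanSpace ℝ (Fin n) → ℝ)
    (g : EuclideanSpace ℝ (Fin n) → EuclideanSpace ℝ (Fin n)) (G : ℝ) (hG : 0 ≤ G)
    (hgrad : ∀ x, HasGradientAt f (g x) x)
    (hsmooth : ∀ x y, ‖g x - g y‖ ≤ G * ‖x - y‖) (x y : EuclideanSpace ℝ (Fin n)) :
    f y - f x ≤ ⟪g x, y - x⟫ + G / 2 * ‖y - x‖ ^ 2 := by
  set v := y - x with hv
  have hgcont : Continuous g := by
    have : LipschitzWith (Real.toNNReal G) g := by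
      apply LipschitzWith.of_dist_le_mul
      intro a b
      rw [dist_eq_norm, dist_eq_norm]
      calc ‖g a - g b‖ ≤ G * ‖a - b‖ := hsmooth a b
        _ ≤ (Real.toNNReal G) * ‖a - b‖ := by
            gcongr; exact Real.le_coe_toNNReal G
    exact this.continuous
  -- derivative of φ s = f (x + s • v)
  have hφ : ∀ s : ℝ, HasDerivAt (fun s : ℝ => f (x + s • v)) ⟪g (x + s • v), v⟫ s := by
    intro s
    have h1 : HasDerivAt (fun s : ℝ => x + s • v) v s := by
      simpa using ((hasDerivAt_id s).smul_const v).const_add x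
    have h2 := (hgrad (x + s • v)).hasFDerivAt
    have := h2.comp_hasDerivAt s h1
    simpa [toDual_apply_apply, Function.comp_def] using this
  have hcont : Continuous fun s : ℝ => ⟪g (x + s • v), v⟫ := by
    exact (Continuous.inner (hgcont.comp (by continuity)) continuous_const)
  have hFTC : f (x + (1:ℝ) • v) - f (x + (0:ℝ) • v)
      = ∫ s in (0:ℝ)..1, ⟪g (x + s • v), v⟫ := by
    rw [intervalIntegral.integral_eq_sub_of_hasDerivAt (fun s _ => hφ s)
      (hcont.intervalIntegrable 0 1)]
  have hbound : ∫ s in (0:ℝ)..1, ⟪g (x + s • v), v⟫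
      ≤ ∫ s in (0:ℝ)..1, (⟪g x, v⟫ + G * ‖v‖^2 * s) := by
    apply intervalIntegral.integral_mono_on (by norm_num)
      (hcont.intervalIntegrable 0 1)
      (((continuous_const.add (continuous_const.mul continuous_id')).intervalIntegrable 0 1))
    intro s hs
    have h1 : ⟪g (x + s • v), v⟫ - ⟪g x, v⟫ = ⟪g (x + s • v) - g x, v⟫ := by
      rw [inner_sub_left]
    have h2 : ⟪g (x + s • v) - g x, v⟫ ≤ ‖g (x + s • v) - g x‖ * ‖v‖ :=
      real_inner_le_norm _ _
    have h3 : ‖g (x + s • v) - g x‖ ≤ G * (s * ‖v‖) := by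
      have := hsmooth (x + s • v) x
      simpa [norm_smul, abs_of_nonneg hs.1] using this
    have h4 : ‖g (x + s • v) - g x‖ * ‖v‖ ≤ G * (s * ‖v‖) * ‖v‖ :=
      mul_le_mul_of_nonneg_right h3 (norm_nonneg _)
    show ⟪g (x + s • v), v⟫ ≤ ⟪g x, v⟫ + G * ‖v‖^2 * s
    nlinarith [norm_nonneg v]
  have hval : ∫ s in (0:ℝ)..1, (⟪g x, v⟫ + G * ‖v‖^2 * s)
      = ⟪g x, v⟫ + G / 2 * ‖v‖ ^ 2 := by
    rw [intervalIntegral.integral_add (g := fun s : ℝ => G * ‖v‖^2 * s) (intervalIntegrable_const)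
      ((continuous_const.mul continuous_id').intervalIntegrable 0 1),
      intervalIntegral.integral_const, intervalIntegral.integral_const_mul, integral_id]
    simp
    ring
  have : f (x + (1:ℝ) • v) - f (x + (0:ℝ) • v) ≤ ⟪g x, v⟫ + G / 2 * ‖v‖ ^ 2 := by
    rw [hFTC]; exact hbound.trans_eq hval
  simpa [hv] using this

/-- If `ℓ_r` is differentiable with `G`-Lipschitz gradient, and
iterates satisfy `θ_{i+1} = θ_i − α_i d_i` with `⟨∇ℓ_r(θ_i), d_i⟩ ≥ −ε_i` for
`i = 0,…,t−1` (with `α_i > 0`, `ε_i ≥ 0`, `t ≥ 1`), then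
`ℓ_r(θ_t) − ℓ_r(θ_0) ≤ Σ_{i<t} (α_i ε_i + (G α_i²/2)‖d_i‖²)`. -/
theorem retain_loss_total_bound {n : ℕ}
    (ℓr : EuclideanSpace ℝ (Fin n) → ℝ)
    (gradr : EuclideanSpace ℝ (Fin n) → EuclideanSpace ℝ (Fin n)) (G : ℝ)
    (hgrad : ∀ x, HasGradientAt ℓr (gradr x) x)
    (hsmooth : ∀ x y, ‖gradr x - gradr y‖ ≤ G * ‖x - y‖)
    (t : ℕ) (ht : 1 ≤ t) (α ε : ℕ → ℝ)
    (θ d : ℕ → EuclideanSpace ℝ (Fin n))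
    (hα : ∀ i < t, 0 < α i) (hε : ∀ i < t, 0 ≤ ε i)
    (hupd : ∀ i < t, θ (i + 1) = θ i - α i • d i)
    (hcon : ∀ i < t, ⟪gradr (θ i), d i⟫ ≥ -(ε i)) :
    ℓr (θ t) - ℓr (θ 0)
      ≤ ∑ i ∈ Finset.range t, (α i * ε i + (G * α i ^ 2 / 2) * ‖d i‖ ^ 2) := by
  by_cases hG : 0 ≤ G
  · have tele : ∑ i ∈ Finset.range t, (ℓr (θ (i + 1)) - ℓr (θ i))
        = ℓr (θ t) - ℓr (θ 0) := Finset.sum_range_sub (fun i => ℓr (θ i)) t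
    rw [← tele]
    apply Finset.sum_le_sum
    intro i hi
    have hi' := Finset.mem_range.mp hi
    have hd := descent ℓr gradr G hG hgrad hsmooth (θ i) (θ (i + 1))
    have hdiff : θ (i + 1) - θ i = -(α i • d i) := by
      rw [hupd i hi']; abel
    have hinner : ⟪gradr (θ i), θ (i + 1) - θ i⟫ = -(α i * ⟪gradr (θ i), d i⟫) := by
      rw [hdiff, inner_neg_right, real_inner_smul_right]
    have hnorm : ‖θ (i + 1) - θ i‖ ^ 2 = α i ^ 2 * ‖d i‖ ^ 2 := by
      rw [hdiff, norm_neg, norm_smul, mul_pow, Real.norm_eq_abs, sq_abs]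
    rw [hinner, hnorm] at hd
    have hc := hcon i hi'
    have ha := hα i hi'
    nlinarith [norm_nonneg (d i), sq_nonneg (α i)]
  · have hsub : ∀ a b : EuclideanSpace ℝ (Fin n), a = b := by
      intro a b
      by_contra hne
      have h1 : 0 < ‖a - b‖ := by
        simpa [sub_eq_zero] using (norm_pos_iff.mpr (sub_ne_zero.mpr hne))
      have h2 := (norm_nonneg (gradr a - gradr b)).trans (hsmooth a b)
      nlinarith [not_le.mp hG]
    have hθ : θ t = θ 0 := hsub _ _
    have hd0 : ∀ i, d i = 0 := fun i => hsub _ _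
    rw [hθ]
    simp only [sub_self]
    apply Finset.sum_nonneg
    intro i hi
    have hi' := Finset.mem_range.mp hi
    rw [hd0 i]
    simp
    exact mul_nonneg (hα i hi').le (hε i hi')
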